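/- Let G be a group with subgroups H and N where N is normal, and suppose G = N ⋊ Λ with Λ ≅ ℤ generated by an element σ. Let K be a compact open subgroup of the totally disconnected locally compact group N with σKσ^{-1} ⊆ K and ⋃_{n≥0} σ^{-n} K σ^n = N. Then the image of the modular function Δ_G is the cyclic multiplicative group generated by the index [K : σKσ^{-1}]. -/

import Mathlib

open MeasureTheory

open scoped Pointwise

/-- A compact subgroup is the disjoint union of finitely many cosets of an open
subgroup contained in it; hence its Haar measure is the relative index times the
measure of the open subgroup. -/
lemma measure_eq_index_mul_measure {G : Type*} [Group G] [TopologicalSpace G]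
    [IsTopologicalGroup G] [MeasurableSpace G] [BorelSpace G]
    (μ : Measure G) [μ.IsMulLeftInvariant]
    (K H : Subgroup G) (hHK : H ≤ K)
    (hKcomp : IsCompact (K : Set G)) (hHopen : IsOpen (H : Set G)) :
    μ (K : Set G) = ((H.subgroupOf K).index : ENNReal) * μ (H : Set G) := by
  have hKcs : CompactSpace K := isCompact_iff_compactSpace.mp hKcomp
  have hfin : Finite (↥K ⧸ H.subgroupOf K) :=
    Subgroup.quotient_finite_of_isOpen _ (Subgroup.subgroupOf_isOpen K H hHopen)
  set Q := ↥K ⧸ H.subgroupOf K with hQ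
  have : Fintype Q := Fintype.ofFinite Q
  set C : Q → Set G := fun q => ((q.out : K) : G) • (H : Set G) with hC
  have hCopen : ∀ q, IsOpen (C q) := by
    intro q
    exact (Homeomorph.mulLeft (((q.out : K) : G))).isOpen_image.mpr hHopen
  have hmem : ∀ (q : Q) (x : G), x ∈ C q ↔ (((q.out : K) : G))⁻¹ * x ∈ H := by
    intro q x
    rw [hC]
    exact Set.mem_smul_set_iff_inv_smul_mem
  have hcover : (K : Set G) = ⋃ q : Q, C q := by
    ext x
    constructor
    · intro hx
      set y : K := ⟨x, hx⟩ with hy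
      set q : Q := QuotientGroup.mk y with hq
      have hout : QuotientGroup.mk (q.out) = QuotientGroup.mk y :=
        QuotientGroup.out_eq' q
      have hmemsub : (q.out)⁻¹ * y ∈ H.subgroupOf K := QuotientGroup.eq.mp hout
      have : (((q.out : K) : G))⁻¹ * x ∈ H := by
        have := (Subgroup.mem_subgroupOf).mp hmemsub
        simpa using this
      exact Set.mem_iUnion.mpr ⟨q, (hmem q x).mpr this⟩
    · intro hx
      obtain ⟨q, hq⟩ := Set.mem_iUnion.mp hx
      have h1 : (((q.out : K) : G))⁻¹ * x ∈ H := (hmem q x).mp hq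
      have h2 : (((q.out : K) : G))⁻¹ * x ∈ K := hHK h1
      have h3 : ((q.out : K) : G) ∈ K := (q.out : K).2
      have := K.mul_mem h3 h2
      simpa using this
  have hdisj : Pairwise (Function.onFun Disjoint C) := by
    intro q1 q2 hne
    rw [Function.onFun]
    rw [Set.disjoint_left]
    intro x hx1 hx2
    apply hne
    have h1 : (((q1.out : K) : G))⁻¹ * x ∈ H := (hmem q1 x).mp hx1
    have h2 : (((q2.out : K) : G))⁻¹ * x ∈ H := (hmem q2 x).mp hx2
    have h3 : (((q1.out : K) : G))⁻¹ * ((q2.out : K) : G) ∈ H := by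
      have := H.mul_mem h1 (H.inv_mem h2)
      have heq : (((q1.out : K) : G))⁻¹ * x * ((((q2.out : K) : G))⁻¹ * x)⁻¹
          = (((q1.out : K) : G))⁻¹ * ((q2.out : K) : G) := by
        group
      rwa [heq] at this
    have h4 : (q1.out)⁻¹ * q2.out ∈ H.subgroupOf K := by
      rw [Subgroup.mem_subgroupOf]
      simpa using h3
    have h5 : QuotientGroup.mk (q1.out) = (QuotientGroup.mk (q2.out) : Q) :=
      QuotientGroup.eq.mpr h4
    rw [QuotientGroup.out_eq', QuotientGroup.out_eq'] at h5
    exact h5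
  have hmeasC : ∀ q : Q, μ (C q) = μ (H : Set G) := by
    intro q
    rw [hC]
    have h : ((q.out : K) : G) • (H : Set G)
        = (fun y => (((q.out : K) : G))⁻¹ * y) ⁻¹' (H : Set G) := by
      ext y
      simp [Set.mem_smul_set_iff_inv_smul_mem, smul_eq_mul]
    show μ (((q.out : K) : G) • (H : Set G)) = μ (H : Set G)
    rw [h]
    exact measure_preimage_mul μ _ _
  have hindex : (H.subgroupOf K).index = Fintype.card Q := by
    rw [Subgroup.index]
    exact Nat.card_eq_fintype_card
  rw [hcover, measure_iUnion hdisj (fun q => (hCopen q).measurableSet)]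
  rw [tsum_fintype]
  simp only [hmeasC]
  rw [Finset.sum_const, Finset.card_univ, hindex, nsmul_eq_mul]

/-- Let `G = N ⋊ ⟨σ⟩` be a totally disconnected locally compact group, `K ≤ N` a
compact open subgroup with `σKσ⁻¹ ⊆ K` and `⋃ₙ σ⁻ⁿKσⁿ = N`. Then the image of the
modular function `Δ_G` is the cyclic multiplicative group generated by the index
`[K : σKσ⁻¹]`. -/
theorem modular_range_eq_cyclic_of_index
    {G : Type*} [Group G] [TopologicalSpace G] [IsTopologicalGroup G]
    [LocallyCompactSpace G] [TotallyDisconnectedSpace G]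
    [MeasurableSpace G] [BorelSpace G]
    (μ : Measure G) [μ.IsHaarMeasure]
    (Δ : G → ℝ)
    (hΔ : ∀ (g : G) (E : Set G), MeasurableSet E →
      μ ((fun x => x * g) '' E) = ENNReal.ofReal (Δ g) * μ E)
    (N : Subgroup G) (σ : G)
    (hsemi : ∀ g : G, ∃! p : N × ℤ, g = (p.1 : G) * σ ^ p.2)
    (K : Subgroup G) (hKN : K ≤ N)
    (hKcomp : IsCompact (K : Set G)) (hKopen : IsOpen (K : Set G))
    (hσK : Subgroup.map (MulAut.conj σ).toMonoidHom K ≤ K)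
    (hcofinal : ∀ x ∈ N, ∃ n : ℕ, σ⁻¹ ^ n * x * σ ^ n ∈ K) :
    Set.range Δ = Set.range (fun k : ℤ =>
      ((((Subgroup.map (MulAut.conj σ).toMonoidHom K).subgroupOf K).index : ℝ)) ^ k) := by
  -- basic measure facts about K
  have hμK0 : μ (K : Set G) ≠ 0 := (hKopen.measure_pos μ ⟨1, K.one_mem⟩).ne'
  have hμKt : μ (K : Set G) ≠ ⊤ := hKcomp.measure_lt_top.ne
  -- cancellation helper
  have hcancel : ∀ a b : ENNReal, a * μ (K : Set G) = b * μ (K : Set G) → a = b := by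
    intro a b hab
    exact (ENNReal.mul_left_inj hμK0 hμKt).mp hab
  -- openness of right translates
  have himgopen : ∀ g : G, IsOpen ((fun x => x * g) '' (K : Set G)) := by
    intro g
    rw [Set.image_mul_right]
    exact hKopen.preimage (by fun_prop)
  -- positivity of Δ
  have hpos : ∀ g : G, 0 < Δ g := by
    intro g
    have h1 := hΔ g _ hKopen.measurableSet
    have hne : μ ((fun x => x * g) '' (K : Set G)) ≠ 0 :=
      ((himgopen g).measure_pos μ ((Set.Nonempty.image _ ⟨1, K.one_mem⟩))).ne'
    rw [h1] at hne
    have h2 : ENNReal.ofReal (Δ g) ≠ 0 := fun h => hne (by simp [h])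
    rw [Ne, ENNReal.ofReal_eq_zero, not_le] at h2
    exact h2
  -- multiplicativity of Δ
  have hmul : ∀ g h : G, Δ (g * h) = Δ g * Δ h := by
    intro g h
    have h1 := hΔ (g * h) _ hKopen.measurableSet
    have h2 := hΔ g _ hKopen.measurableSet
    have h3 := hΔ h _ (himgopen g).measurableSet
    have hcomp : (fun x => x * (g * h)) '' (K : Set G)
        = (fun x => x * h) '' ((fun x => x * g) '' (K : Set G)) := by
      rw [Set.image_image]
      simp [mul_assoc]
    rw [hcomp, h3, h2, ← mul_assoc] at h1
    have h4 : ENNReal.ofReal (Δ h) * ENNReal.ofReal (Δ g)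
        = ENNReal.ofReal (Δ (g * h)) := hcancel _ _ h1
    rw [← ENNReal.ofReal_mul (hpos h).le] at h4
    have h5 := (ENNReal.ofReal_eq_ofReal_iff
      (mul_nonneg (hpos h).le (hpos g).le) (hpos (g * h)).le).mp h4
    rw [← h5, mul_comm]
  -- Δ is 1 on K
  have hK1 : ∀ x ∈ K, Δ x = 1 := by
    intro x hx
    have himg : (fun y => y * x) '' (K : Set G) = K := by
      ext y
      constructor
      · rintro ⟨z, hz, rfl⟩
        exact K.mul_mem hz hx
      · intro hy
        exact ⟨y * x⁻¹, K.mul_mem hy (K.inv_mem hx), by group⟩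
    have h1 := hΔ x _ hKopen.measurableSet
    rw [himg] at h1
    have h2 : ENNReal.ofReal (Δ x) = 1 := by
      apply hcancel
      rw [one_mul, ← h1]
    rw [ENNReal.ofReal_eq_one] at h2
    exact h2
  have hΔ1 : Δ 1 = 1 := hK1 1 K.one_mem
  -- inverses
  have hinv : ∀ g : G, Δ g⁻¹ = (Δ g)⁻¹ := by
    intro g
    have h1 : Δ g⁻¹ * Δ g = 1 := by
      rw [← hmul, inv_mul_cancel, hΔ1]
    exact eq_inv_of_mul_eq_one_left h1
  -- powers
  have hnpow : ∀ n : ℕ, Δ (σ ^ n) = Δ σ ^ n := by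
    intro n
    induction n with
    | zero => simpa using hΔ1
    | succ n ih => rw [pow_succ, pow_succ, hmul, ih]
  have hzpow : ∀ k : ℤ, Δ (σ ^ k) = Δ σ ^ k := by
    intro k
    cases k with
    | ofNat n => simpa using hnpow n
    | negSucc n =>
      rw [zpow_negSucc, zpow_negSucc, hinv, hnpow]
  -- Δ is 1 on N
  have hN1 : ∀ x ∈ N, Δ x = 1 := by
    intro x hx
    obtain ⟨n, hn⟩ := hcofinal x hx
    have h1 : Δ (σ⁻¹ ^ n * x * σ ^ n) = 1 := hK1 _ hn
    rw [hmul, hmul, inv_pow, hinv, hnpow] at h1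
    have h2 : Δ σ ^ n ≠ 0 := pow_ne_zero _ (hpos σ).ne'
    field_simp at h1
    exact h1
  -- the conjugated subgroup H
  set H := Subgroup.map (MulAut.conj σ).toMonoidHom K with hH
  have hHmem : ∀ y : G, y ∈ H ↔ σ⁻¹ * y * σ ∈ K := by
    intro y
    rw [hH, Subgroup.mem_map]
    constructor
    · rintro ⟨x, hx, rfl⟩
      simpa [MulAut.conj_apply, mul_assoc] using hx
    · intro hy
      refine ⟨σ⁻¹ * y * σ, hy, ?_⟩
      simp [MulAut.conj_apply, mul_assoc]
  have hHset : (H : Set G) = (fun y => σ⁻¹ * y * σ) ⁻¹' (K : Set G) := by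
    ext y
    simpa using hHmem y
  have hHopen : IsOpen (H : Set G) := by
    rw [hHset]
    exact hKopen.preimage (by fun_prop)
  have hμH0 : μ (H : Set G) ≠ 0 := (hHopen.measure_pos μ ⟨1, H.one_mem⟩).ne'
  have hμHt : μ (H : Set G) ≠ ⊤ :=
    (lt_of_le_of_lt (measure_mono hσK) hKcomp.measure_lt_top).ne
  -- index formula
  have hidx := measure_eq_index_mul_measure μ K H hσK hKcomp hHopen
  set d : ℕ := (H.subgroupOf K).index with hd
  -- compute μ H via translation: H = σ • (K σ⁻¹)
  have hHimg : (H : Set G) = (fun y => σ * y) '' ((fun x => x * σ⁻¹) '' (K : Set G)) := by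
    rw [Set.image_image]
    ext y
    simp only [SetLike.mem_coe, hHmem y, Set.mem_image, SetLike.mem_coe]
    constructor
    · intro hy
      exact ⟨σ⁻¹ * y * σ, hy, by group⟩
    · rintro ⟨x, hx, rfl⟩
      have h : σ⁻¹ * (σ * (x * σ⁻¹)) * σ = x := by group
      rwa [h]
  have hμHeq : μ (H : Set G) = ENNReal.ofReal (Δ σ⁻¹) * μ (K : Set G) := by
    rw [hHimg]
    have : (fun y => σ * y) '' ((fun x => x * σ⁻¹) '' (K : Set G))
        = (fun y => σ⁻¹ * y) ⁻¹' ((fun x => x * σ⁻¹) '' (K : Set G)) := by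
      rw [← Set.image_mul_left]
    rw [this, measure_preimage_mul μ _ _, hΔ σ⁻¹ _ hKopen.measurableSet]
  -- derive  ofReal (Δ σ⁻¹) * d = 1
  have hkey : ENNReal.ofReal (Δ σ⁻¹) * (d : ENNReal) = 1 := by
    have h1 : μ (H : Set G) = (ENNReal.ofReal (Δ σ⁻¹) * (d : ENNReal)) * μ (H : Set G) := by
      calc μ (H : Set G) = ENNReal.ofReal (Δ σ⁻¹) * μ (K : Set G) := hμHeq
      _ = ENNReal.ofReal (Δ σ⁻¹) * ((d : ENNReal) * μ (H : Set G)) := by rw [← hidx]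
      _ = (ENNReal.ofReal (Δ σ⁻¹) * (d : ENNReal)) * μ (H : Set G) := by rw [mul_assoc]
    have h2 : (1 : ENNReal) * μ (H : Set G)
        = (ENNReal.ofReal (Δ σ⁻¹) * (d : ENNReal)) * μ (H : Set G) := by
      rw [one_mul, ← h1]
    exact ((ENNReal.mul_left_inj hμH0 hμHt).mp h2).symm
  have hd0 : d ≠ 0 := by
    intro h
    rw [h] at hkey
    simp at hkey
  -- Δ σ⁻¹ = (d : ℝ)⁻¹
  have hσinv : Δ σ⁻¹ = (d : ℝ)⁻¹ := by
    have hdpos : (0 : ℝ) < (d : ℝ) := by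
      exact_mod_cast Nat.pos_of_ne_zero hd0
    have h1 : ENNReal.ofReal (Δ σ⁻¹) = ((d : ENNReal))⁻¹ :=
      ENNReal.eq_inv_of_mul_eq_one_left hkey
    have h2 : ((d : ENNReal))⁻¹ = ENNReal.ofReal ((d : ℝ)⁻¹) := by
      rw [ENNReal.ofReal_inv_of_pos hdpos, ENNReal.ofReal_natCast]
    rw [h2] at h1
    exact (ENNReal.ofReal_eq_ofReal_iff (hpos σ⁻¹).le (by positivity)).mp h1
  have hσd : Δ σ = (d : ℝ) := by
    have h1 : Δ σ = (Δ σ⁻¹)⁻¹ := by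
      rw [hinv, inv_inv]
    rw [h1, hσinv, inv_inv]
  -- conclude
  ext r
  simp only [Set.mem_range]
  constructor
  · rintro ⟨g, rfl⟩
    obtain ⟨p, hp, -⟩ := hsemi g
    refine ⟨p.2, ?_⟩
    rw [hp, hmul, hN1 _ p.1.2, one_mul, hzpow, hσd]
  · rintro ⟨k, rfl⟩
    exact ⟨σ ^ k, by rw [hzpow, hσd]⟩
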